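/- Let λ_{2k}^1 = -(1/π) ∫_0^1 arccos²(t) C_{2k}(t) (1-t²)^{-1/2} dt, where C_{2k} is the Chebyshev polynomial of the first kind of degree 2k. Then the sequence (λ_{2k}^1)_{k≥1} has alternating signs, and |λ_{2k}^1| = Θ(k^{-2}) as k → ∞. -/

import Mathlib

open MeasureTheory Real

noncomputable section

/-- The sphere `S^n` of radius one in `ℝ^{n+1}`. -/
abbrev unitSphere (n : ℕ) := Metric.sphere (0 : EuclideanSpace ℝ (Fin (n + 1))) 1

/-- The (n-dimensional) volume of the round sphere `S^n ⊂ ℝ^{n+1}`. -/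
def sphereVolume (n : ℕ) : ℝ := 2 * π ^ (((n : ℝ) + 1) / 2) / Real.Gamma (((n : ℝ) + 1) / 2)

/-- The constant `σ_n = -vol(S^{n-1})/vol(S^n)`. -/
def sigmaMDS (n : ℕ) : ℝ :=
  -(2 * π ^ ((n : ℝ) / 2) / Real.Gamma ((n : ℝ) / 2)) / sphereVolume n

/-- The Rodrigues constant `R_{2k}^n = 4^{-k} Γ(n/2)/Γ(n/2+2k)`. -/
def rodriguesR (n k : ℕ) : ℝ :=
  (1 / 4 ^ k) * Real.Gamma ((n : ℝ) / 2) / Real.Gamma ((n : ℝ) / 2 + 2 * k)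

/-- `F_{2k}^n(t) = P_{2k}^n(t)(1-t²)^{(n-2)/2}
  = R_{2k}^n (d/dt)^{2k} (1-t²)^{2k+(n-2)/2}` (Rodrigues formula), where `P_{2k}^n` is the
degree-`2k` Legendre polynomial for `S^n`. -/
def legendreF (n k : ℕ) (t : ℝ) : ℝ :=
  rodriguesR n k *
    iteratedDeriv (2 * k) (fun s : ℝ => (1 - s ^ 2) ^ (2 * (k : ℝ) + ((n : ℝ) - 2) / 2)) t

/-- The eigenvalue `λ_{2k}^n = σ_n ∫_0^1 arccos²(t) P_{2k}^n(t)(1-t²)^{(n-2)/2} dt` of the MDS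
integral operator on `ℝP^n` on degree-`2k` spherical harmonics. -/
def lamRP (n k : ℕ) : ℝ :=
  sigmaMDS n * ∫ t in (0 : ℝ)..1, Real.arccos t ^ 2 * legendreF n k t

/-- `φ : S^n → ℝ` is a spherical harmonic of degree `k`: the restriction to the sphere of a
smooth function on `ℝ^{n+1}` which is homogeneous of degree `k` and harmonic. -/
def IsSphericalHarmonic (n k : ℕ) (φ : unitSphere n → ℝ) : Prop :=
  ∃ p : EuclideanSpace ℝ (Fin (n + 1)) → ℝ, ContDiff ℝ ⊤ p ∧
    (∀ (r : ℝ) (x), p (r • x) = r ^ k * p x) ∧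
    (∀ x, ∑ i, fderiv ℝ (fun y => fderiv ℝ p y (EuclideanSpace.single i 1)) x
        (EuclideanSpace.single i 1) = 0) ∧
    ∀ x : unitSphere n, φ x = p (x : EuclideanSpace ℝ (Fin (n + 1)))

end

open Asymptotics Filter

/-- The circle eigenvalues `λ_{2k}^1 = -(1/π) ∫_0^1 arccos²(t) C_{2k}(t)(1-t²)^{-1/2} dt`,
where `C_{2k}` is the Chebyshev polynomial of the first kind of degree `2k`. -/
noncomputable def lamCircle (k : ℕ) : ℝ :=
  -(1 / π) * ∫ t in (0 : ℝ)..1,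
    Real.arccos t ^ 2 * (Polynomial.Chebyshev.T ℝ (2 * k)).eval t * (1 - t ^ 2) ^ (-(1:ℝ)/2)

lemma subst_lemma (k : ℕ) :
    (∫ t in (0:ℝ)..1,
      Real.arccos t ^ 2 * (Polynomial.Chebyshev.T ℝ (2 * k)).eval t * (1 - t ^ 2) ^ (-(1:ℝ)/2))
    = ∫ θ in (0:ℝ)..(π/2), θ ^ 2 * Real.cos (2 * k * θ) := by
  have h01 : (0:ℝ) ≤ 1 := zero_le_one
  set g : ℝ → ℝ := fun θ => -(θ ^ 2 * Real.cos (2 * k * θ)) with hg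
  set f' : ℝ → ℝ := fun t => -(Real.sqrt (1 - t ^ 2))⁻¹ with hf'
  have gcont : Continuous g := by fun_prop
  have hrw : ∀ t ∈ Set.Icc (0:ℝ) 1,
      ((1 - t ^ 2 : ℝ) ^ (-(1:ℝ)/2)) = (Real.sqrt (1 - t ^ 2))⁻¹ := by
    intro t ht
    have h1 : (0:ℝ) ≤ 1 - t ^ 2 := by nlinarith [ht.1, ht.2]
    rw [Real.sqrt_eq_rpow, ← Real.rpow_neg h1]
    norm_num
  have hbound : ∀ t ∈ Set.Icc (0:ℝ) 1,
      (Real.sqrt (1 - t ^ 2))⁻¹ ≤ (1 - t) ^ (-(1:ℝ)/2) := by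
    intro t ht
    rw [← hrw t ht]
    rcases eq_or_lt_of_le ht.2 with h | h
    · rw [h]
      norm_num [Real.zero_rpow]
    · have h1 : (0:ℝ) < 1 - t := by linarith
      have h2 : (1 - t : ℝ) ≤ 1 - t ^ 2 := by nlinarith [ht.1]
      exact Real.rpow_le_rpow_of_nonpos h1 h2 (by norm_num)
  have key : (∫ t in (0:ℝ)..1, f' t • (g ∘ Real.arccos) t)
      = ∫ u in (Real.arccos 0)..(Real.arccos 1), g u := by
    apply intervalIntegral.integral_comp_smul_deriv'''
    · exact Real.continuous_arccos.continuousOn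
    · intro x hx
      simp only [min_eq_left h01, max_eq_right h01] at hx
      have hd : HasDerivAt Real.arccos (f' x) x := by
        have := Real.hasDerivAt_arccos (by linarith [hx.1] : x ≠ -1) (ne_of_lt hx.2)
        simpa [hf', one_div] using this
      exact hd.hasDerivWithinAt
    · exact gcont.continuousOn
    · exact gcont.continuousOn.integrableOn_compact
        (isCompact_uIcc.image Real.continuous_arccos)
    · rw [Set.uIcc_of_le h01]
      have hφ : IntegrableOn (fun t : ℝ => π ^ 2 * (1 - t) ^ (-(1:ℝ)/2))
          (Set.Icc (0:ℝ) 1) := by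
        have h1 : IntervalIntegrable (fun x : ℝ => x ^ (-(1:ℝ)/2)) volume 0 1 :=
          intervalIntegral.intervalIntegrable_rpow' (by norm_num)
        have h2 := h1.comp_sub_left 1
        simp only [sub_zero, sub_self] at h2
        have h3 := h2.symm.const_mul (π ^ 2)
        rw [intervalIntegrable_iff_integrableOn_Icc_of_le h01] at h3
        exact h3
      apply hφ.integrable.mono'
      · apply Measurable.aestronglyMeasurable
        have hm : Measurable f' := by
          exact (((continuous_const.sub (continuous_pow 2)).sqrt).measurable.inv).neg
        exact (hm.smul ((gcont.comp Real.continuous_arccos).measurable))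
      · rw [ae_restrict_iff' measurableSet_Icc]
        refine Filter.Eventually.of_forall fun t ht => ?_
        have h1 : (0:ℝ) ≤ 1 - t ^ 2 := by nlinarith [ht.1, ht.2]
        have hgb : |g (Real.arccos t)| ≤ π ^ 2 := by
          rw [hg]
          have h2 := Real.arccos_nonneg t
          have h3 := Real.arccos_le_pi t
          have h4 := Real.abs_cos_le_one (2 * k * Real.arccos t)
          rw [abs_neg, abs_mul]
          have : |Real.arccos t ^ 2| ≤ π ^ 2 := by
            rw [abs_of_nonneg (by positivity)]
            exact pow_le_pow_left₀ h2 h3 2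
          nlinarith [abs_nonneg (Real.cos (2 * k * Real.arccos t)),
            abs_nonneg (Real.arccos t ^ 2)]
        have hf'abs : |f' t| = (Real.sqrt (1 - t ^ 2))⁻¹ := by
          rw [hf', abs_neg, abs_inv, abs_of_nonneg (Real.sqrt_nonneg _)]
        calc ‖f' t • (g ∘ Real.arccos) t‖
            = |f' t| * |g (Real.arccos t)| := by
              simp [Real.norm_eq_abs, abs_mul, Function.comp]
          _ ≤ (1 - t) ^ (-(1:ℝ)/2) * π ^ 2 := by
              rw [hf'abs]
              exact mul_le_mul (hbound t ht) hgb (abs_nonneg _)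
                (Real.rpow_nonneg (by linarith [ht.2]) _)
          _ = π ^ 2 * (1 - t) ^ (-(1:ℝ)/2) := by ring
  have hcongr : (∫ t in (0:ℝ)..1,
      Real.arccos t ^ 2 * (Polynomial.Chebyshev.T ℝ (2 * k)).eval t * (1 - t ^ 2) ^ (-(1:ℝ)/2))
      = ∫ t in (0:ℝ)..1, f' t • (g ∘ Real.arccos) t := by
    apply intervalIntegral.integral_congr
    intro t ht
    rw [Set.uIcc_of_le h01] at ht
    have hT : (Polynomial.Chebyshev.T ℝ (2 * k)).eval t
        = Real.cos (2 * k * Real.arccos t) := by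
      conv_lhs => rw [← Real.cos_arccos (by linarith [ht.1]) ht.2]
      rw [Polynomial.Chebyshev.T_real_cos]
      push_cast
      ring_nf
    simp only [Function.comp, hf', hg, smul_eq_mul]
    rw [hT, hrw t ht]
    ring
  rw [hcongr, key, Real.arccos_zero, Real.arccos_one,
    intervalIntegral.integral_symm, intervalIntegral.integral_neg]
  simp [hg]

lemma int_eval (k : ℕ) (hk : 1 ≤ k) :
    (∫ θ in (0:ℝ)..(π/2), θ ^ 2 * Real.cos (2 * k * θ))
      = π * (-1) ^ k / (4 * k ^ 2) := by
  have hk0 : (0:ℝ) < (k:ℝ) := by exact_mod_cast hk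
  set a : ℝ := 2 * k with ha
  have ha0 : a ≠ 0 := by positivity
  set F : ℝ → ℝ := fun θ =>
    θ ^ 2 * Real.sin (a * θ) / a + 2 * θ * Real.cos (a * θ) / a ^ 2
      - 2 * Real.sin (a * θ) / a ^ 3 with hF
  have hder : ∀ θ : ℝ, HasDerivAt F (θ ^ 2 * Real.cos (a * θ)) θ := by
    intro θ
    have hs : HasDerivAt (fun θ : ℝ => Real.sin (a * θ)) (Real.cos (a * θ) * a) θ := by
      exact ((Real.hasDerivAt_sin (a * θ)).comp θ ((hasDerivAt_id θ).const_mul a)).congr_deriv (by simp)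
    have hc : HasDerivAt (fun θ : ℝ => Real.cos (a * θ)) (-Real.sin (a * θ) * a) θ := by
      exact ((Real.hasDerivAt_cos (a * θ)).comp θ ((hasDerivAt_id θ).const_mul a)).congr_deriv (by simp)
    have h1 : HasDerivAt (fun θ : ℝ => θ ^ 2 * Real.sin (a * θ) / a)
        ((2 * θ * Real.sin (a * θ) + θ ^ 2 * (Real.cos (a * θ) * a)) / a) θ := by
      exact ((hasDerivAt_pow 2 θ).mul hs).div_const a |>.congr_deriv (by ring)
    have h2 : HasDerivAt (fun θ : ℝ => 2 * θ * Real.cos (a * θ) / a ^ 2)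
        ((2 * Real.cos (a * θ) + 2 * θ * (-Real.sin (a * θ) * a)) / a ^ 2) θ := by
      have := (((hasDerivAt_id θ).const_mul 2).mul hc).div_const (a ^ 2)
      simp only [id_eq] at this
      exact this.congr_deriv (by ring)
    have h3 : HasDerivAt (fun θ : ℝ => 2 * Real.sin (a * θ) / a ^ 3)
        (2 * (Real.cos (a * θ) * a) / a ^ 3) θ := by
      exact ((hs.const_mul 2).div_const (a ^ 3)).congr_deriv (by ring)
    have := (h1.add h2).sub h3
    refine this.congr_deriv ?_
    rw [ha]
    field_simp
    ring
  have hint : (∫ θ in (0:ℝ)..(π/2), θ ^ 2 * Real.cos (a * θ)) = F (π/2) - F 0 := by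
    apply intervalIntegral.integral_eq_sub_of_hasDerivAt (fun θ _ => hder θ)
    exact (Continuous.intervalIntegrable (by fun_prop) _ _)
  rw [ha] at hint
  rw [hint]
  have hpi : a * (π/2) = k * π := by rw [ha]; ring
  rw [hF]
  simp only [hpi, mul_zero, Real.sin_zero, Real.cos_zero, Real.sin_nat_mul_pi]
  have hcos : Real.cos ((k:ℝ) * π) = (-1) ^ k := by
    simpa using Real.cos_nat_mul_pi_sub 0 k
  rw [hcos, ha]
  field_simp
  ring

lemma lamCircle_eq (k : ℕ) (hk : 1 ≤ k) :
    lamCircle k = (-1) ^ (k + 1) / (4 * (k:ℝ) ^ 2) := by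
  have hk0 : (0:ℝ) < (k:ℝ) := by exact_mod_cast hk
  unfold lamCircle
  rw [subst_lemma, int_eval k hk, pow_succ]
  have hπ : π ≠ 0 := Real.pi_ne_zero
  field_simp
  ring

/-- the sequence `(λ_{2k}^1)_{k ≥ 1}` has alternating signs and
`|λ_{2k}^1| = Θ(k⁻²)` as `k → ∞`. -/
theorem lamCircle_alternating_and_asymptotics :
    (∀ k : ℕ, 1 ≤ k → lamCircle k * lamCircle (k + 1) < 0) ∧
    ((fun k : ℕ => |lamCircle k|) =Θ[atTop] fun k : ℕ => (k : ℝ) ^ (-2 : ℝ)) := by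
  constructor
  · intro k hk
    have hk0 : (0:ℝ) < (k:ℝ) := by exact_mod_cast hk
    rw [lamCircle_eq k hk, lamCircle_eq (k + 1) (le_trans hk (Nat.le_succ k)),
      div_mul_div_comm]
    have h1 : ((-1:ℝ)) ^ (k + 1) * (-1) ^ (k + 1 + 1) = -1 := by
      rw [← pow_add, show k + 1 + (k + 1 + 1) = 2 * (k + 1) + 1 by ring, pow_succ,
        pow_mul]
      norm_num
    rw [h1]
    apply div_neg_of_neg_of_pos (by norm_num)
    push_cast
    positivity
  · have heq : (fun k : ℕ => |lamCircle k|) =ᶠ[atTop]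
        fun k : ℕ => (1/4 : ℝ) * (k : ℝ) ^ (-2 : ℝ) := by
      filter_upwards [eventually_ge_atTop 1] with k hk
      have hk0 : (0:ℝ) < (k:ℝ) := by exact_mod_cast hk
      rw [lamCircle_eq k hk, abs_div, abs_pow, abs_neg, abs_one, one_pow,
        show (-2:ℝ) = ((-2:ℤ):ℝ) by norm_num, Real.rpow_intCast]
      rw [abs_of_pos (by positivity)]
      field_simp
    exact heq.trans_isTheta
      ((Asymptotics.isTheta_const_mul_left (by norm_num : (1/4:ℝ) ≠ 0)).2 Asymptotics.isTheta_rfl)
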